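/- For all fixed nonnegative integers a and b, the quantity Σ(n,a,b) := ∑_{j=1}^{b} (κ_{j+a−1} + κ_{n−j−a}) · (b − 1 + κ_{j−1} + κ_{b−j} − κ_b) converges, as n → ∞, to Λ(a,b) := ∑_{j=1}^{b} κ_{j+a−1} · (b − 1 + κ_{j−1} + κ_{b−j} − κ_b). -/

import Mathlib

open Finset Filter Topology

/-- The `n`-th harmonic number `H_n = ∑_{i=1}^n 1/i`. -/
noncomputable def H (n : ℕ) : ℝ := ∑ i ∈ Finset.range n, (1 : ℝ) / (i + 1)

/-- `κ_n = 2(n+1)H_n - 4n`, the mean number of key comparisons for QuickSort on `n` keys. -/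
noncomputable def κ (n : ℕ) : ℝ := 2 * (n + 1) * H n - 4 * n

lemma H_succ (m : ℕ) : H (m + 1) = H m + 1 / (m + 1) := by
  simp [H, Finset.sum_range_succ]

lemma kstep (m : ℕ) : κ (m + 1) - κ m = 2 * H (m + 1) - 2 := by
  have h := H_succ m
  have hm : ((m : ℝ) + 1) ≠ 0 := by positivity
  simp only [κ, h]
  push_cast
  field_simp
  ring

lemma ksum (b : ℕ) : 2 * ∑ k ∈ Finset.range b, κ k = b * κ b - b * (b - 1) := by
  induction b with
  | zero => simp
  | succ b ih =>
    rw [Finset.sum_range_succ]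
    have h1 : κ (b + 1) = κ b + (2 * H (b + 1) - 2) := by linarith [kstep b]
    have h2 : H (b + 1) = H b + 1 / (b + 1) := H_succ b
    have h3 : κ b = 2 * (b + 1) * H b - 4 * b := rfl
    have hm : ((b : ℝ) + 1) ≠ 0 := by positivity
    rw [h1, h2]
    push_cast
    field_simp
    nlinarith [ih, h3]

lemma refl_sum (f : ℕ → ℝ) (b : ℕ) :
    ∑ j ∈ Finset.Icc 1 b, f j = ∑ j ∈ Finset.Icc 1 b, f (b + 1 - j) := by
  apply Finset.sum_nbij' (fun j => b + 1 - j) (fun j => b + 1 - j) <;>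
    simp only [Finset.mem_Icc] <;> intros <;> first | omega | trivial | (congr 1; omega)

lemma Hdiff (k : ℕ) : Tendsto (fun n : ℕ => H (n + k) - H n) atTop (𝓝 0) := by
  induction k with
  | zero => simpa using tendsto_const_nhds
  | succ k ih =>
    have h1 : Tendsto (fun n : ℕ => (1 : ℝ) / (n + k + 1)) atTop (𝓝 0) := by
      have := (tendsto_one_div_add_atTop_nhds_zero_nat (𝕜 := ℝ)).comp (tendsto_add_atTop_nat k)
      apply this.congr
      intro n
      simp only [Function.comp]
      push_cast
      ring
    have h2 := ih.add h1
    rw [add_zero] at h2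
    apply h2.congr
    intro n
    rw [show n + (k + 1) = (n + k) + 1 by ring, H_succ]
    push_cast
    ring

/-- The deviation of `κ (m + k)` from the affine approximation vanishes. -/
lemma kaffine (k : ℕ) :
    Tendsto (fun m : ℕ => κ (m + k) - (κ m + k * (κ (m + 1) - κ m))) atTop (𝓝 0) := by
  induction k with
  | zero => simpa using tendsto_const_nhds
  | succ k ih =>
    have h1 : Tendsto (fun m : ℕ => 2 * (H ((m + 1) + k) - H (m + 1))) atTop (𝓝 0) := by
      have := ((Hdiff k).comp (tendsto_add_atTop_nat 1)).const_mul (2 : ℝ)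
      simpa using this
    have h2 := ih.add h1
    rw [add_zero] at h2
    apply h2.congr
    intro m
    have e1 : κ (m + (k + 1)) - κ (m + k) = 2 * H (m + k + 1) - 2 := by
      have := kstep (m + k); rw [show m + k + 1 = m + (k + 1) by ring] at this ⊢
      linarith
    have e2 : κ (m + 1) - κ m = 2 * H (m + 1) - 2 := kstep m
    have e3 : (m + 1) + k = m + k + 1 := by ring
    rw [e3]
    push_cast
    linarith [e1, e2]

theorem sigma_tendsto_lambda (a b : ℕ) :
    Filter.Tendsto
      (fun n : ℕ => ∑ j ∈ Finset.Icc 1 b,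
        (κ (j + a - 1) + κ (n - j - a)) *
          ((b : ℝ) - 1 + κ (j - 1) + κ (b - j) - κ b))
      Filter.atTop
      (𝓝 (∑ j ∈ Finset.Icc 1 b,
        κ (j + a - 1) * ((b : ℝ) - 1 + κ (j - 1) + κ (b - j) - κ b))) := by
  set w : ℕ → ℝ := fun j => (b : ℝ) - 1 + κ (j - 1) + κ (b - j) - κ b with hw
  -- symmetry of w
  have wsymm : ∀ j ∈ Finset.Icc 1 b, w (b + 1 - j) = w j := by
    intro j hj
    simp only [Finset.mem_Icc] at hj
    simp only [hw]
    rw [show b + 1 - j - 1 = b - j by omega, show b - (b + 1 - j) = j - 1 by omega]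
    ring
  -- sum of w is zero
  have hsum0 : ∑ j ∈ Finset.Icc 1 b, w j = 0 := by
    have hrefl : ∑ j ∈ Finset.Icc 1 b, κ (b - j) = ∑ j ∈ Finset.Icc 1 b, κ (j - 1) := by
      rw [refl_sum (fun j => κ (b - j)) b]
      apply Finset.sum_congr rfl
      intro j hj
      simp only [Finset.mem_Icc] at hj
      congr 1
      omega
    have hr : ∑ j ∈ Finset.Icc 1 b, κ (j - 1) = ∑ k ∈ Finset.range b, κ k := by
      apply Finset.sum_nbij' (fun j => j - 1) (fun k => k + 1) <;>
        simp only [Finset.mem_Icc, Finset.mem_range] <;> intros <;>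
          first | omega | trivial | (congr 1; omega)
    have hk := ksum b
    have hcard : (Finset.Icc 1 b).card = b := by simp
    calc ∑ j ∈ Finset.Icc 1 b, w j
        = ∑ j ∈ Finset.Icc 1 b, (((b : ℝ) - 1 - κ b) + (κ (j - 1) + κ (b - j))) := by
          apply Finset.sum_congr rfl; intro j _; simp only [hw]; ring
      _ = b * ((b : ℝ) - 1 - κ b) + 2 * ∑ k ∈ Finset.range b, κ k := by
          rw [Finset.sum_add_distrib, Finset.sum_const, hcard, Finset.sum_add_distrib,
            hrefl, hr]
          push_cast
          ring
      _ = 0 := by rw [hk]; ring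
  -- weighted sum (by b - j) is zero
  have hsum1 : ∑ j ∈ Finset.Icc 1 b, ((b - j : ℕ) : ℝ) * w j = 0 := by
    have hrefl : ∑ j ∈ Finset.Icc 1 b, ((b - j : ℕ) : ℝ) * w j
        = ∑ j ∈ Finset.Icc 1 b, ((j - 1 : ℕ) : ℝ) * w j := by
      rw [refl_sum (fun j => ((b - j : ℕ) : ℝ) * w j) b]
      apply Finset.sum_congr rfl
      intro j hj
      simp only [Finset.mem_Icc] at hj
      rw [wsymm j (Finset.mem_Icc.mpr hj), show b - (b + 1 - j) = j - 1 by omega]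
    have hadd : ∑ j ∈ Finset.Icc 1 b, (((b - j : ℕ) : ℝ) + ((j - 1 : ℕ) : ℝ)) * w j
        = ((b : ℝ) - 1) * ∑ j ∈ Finset.Icc 1 b, w j := by
      rw [Finset.mul_sum]
      apply Finset.sum_congr rfl
      intro j hj
      simp only [Finset.mem_Icc] at hj
      have : ((b - j : ℕ) : ℝ) + ((j - 1 : ℕ) : ℝ) = (b : ℝ) - 1 := by
        have h1 : (b - j : ℕ) + (j - 1 : ℕ) = b - 1 := by omega
        have h2 : (1:ℕ) ≤ b := le_trans hj.1 hj.2
        rw [← Nat.cast_add, h1, Nat.cast_sub h2, Nat.cast_one]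
      rw [this]
    rw [hsum0, mul_zero] at hadd
    have : ∑ j ∈ Finset.Icc 1 b, (((b - j : ℕ) : ℝ) + ((j - 1 : ℕ) : ℝ)) * w j
        = ∑ j ∈ Finset.Icc 1 b, ((b - j : ℕ) : ℝ) * w j
          + ∑ j ∈ Finset.Icc 1 b, ((j - 1 : ℕ) : ℝ) * w j := by
      rw [← Finset.sum_add_distrib]
      apply Finset.sum_congr rfl
      intro j _
      ring
    rw [this, ← hrefl] at hadd
    linarith
  -- the n-dependent part vanishes (in shifted coordinates)
  have core : Tendsto (fun m : ℕ => ∑ j ∈ Finset.Icc 1 b, κ (m + (b - j)) * w j)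
      atTop (𝓝 0) := by
    have heq : ∀ m : ℕ, ∑ j ∈ Finset.Icc 1 b, κ (m + (b - j)) * w j
        = ∑ j ∈ Finset.Icc 1 b,
            (κ (m + (b - j)) - (κ m + ((b - j : ℕ) : ℝ) * (κ (m + 1) - κ m))) * w j := by
      intro m
      have expand : ∑ j ∈ Finset.Icc 1 b,
            (κ (m + (b - j)) - (κ m + ((b - j : ℕ) : ℝ) * (κ (m + 1) - κ m))) * w j
          = ∑ j ∈ Finset.Icc 1 b, κ (m + (b - j)) * w j
            - κ m * ∑ j ∈ Finset.Icc 1 b, w j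
            - (κ (m + 1) - κ m) * ∑ j ∈ Finset.Icc 1 b, ((b - j : ℕ) : ℝ) * w j := by
        rw [Finset.mul_sum, Finset.mul_sum, ← Finset.sum_sub_distrib, ← Finset.sum_sub_distrib]
        apply Finset.sum_congr rfl
        intro j _
        ring
      rw [expand, hsum0, hsum1]
      ring
    simp only [heq]
    have : Tendsto (fun m : ℕ => ∑ j ∈ Finset.Icc 1 b,
        (κ (m + (b - j)) - (κ m + ((b - j : ℕ) : ℝ) * (κ (m + 1) - κ m))) * w j)
        atTop (𝓝 (∑ j ∈ Finset.Icc 1 b, (0 : ℝ))) := by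
      apply tendsto_finset_sum
      intro j _
      have := (kaffine (b - j)).mul_const (w j)
      simpa using this
    simpa using this
  -- transfer back to original coordinates
  have vanish : Tendsto (fun n : ℕ => ∑ j ∈ Finset.Icc 1 b, κ (n - j - a) * w j)
      atTop (𝓝 0) := by
    have hcomp := core.comp (tendsto_sub_atTop_nat (a + b))
    apply hcomp.congr'
    filter_upwards [eventually_ge_atTop (a + b)] with n hn
    simp only [Function.comp]
    apply Finset.sum_congr rfl
    intro j hj
    simp only [Finset.mem_Icc] at hj
    congr 2
    omega
  -- assemble
  have split : ∀ n : ℕ, ∑ j ∈ Finset.Icc 1 b, (κ (j + a - 1) + κ (n - j - a)) * w j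
      = (∑ j ∈ Finset.Icc 1 b, κ (j + a - 1) * w j)
        + ∑ j ∈ Finset.Icc 1 b, κ (n - j - a) * w j := by
    intro n
    rw [← Finset.sum_add_distrib]
    apply Finset.sum_congr rfl
    intro j _
    ring
  have := (tendsto_const_nhds (x := ∑ j ∈ Finset.Icc 1 b, κ (j + a - 1) * w j)
    (f := atTop (α := ℕ))).add vanish
  rw [add_zero] at this
  apply this.congr
  intro n
  rw [← split n]
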